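/- Under the squigonometric hypotheses with p > 1, for every real q > 0: the function t ↦ (C(t)^((p-1)·q) + S(t)^((p-1)·q))^(1/q) equals 1 for all t ∈ [0,T] if and only if (p-1)·q = p. -/
import Mathlib


/-- Under the squigonometric hypotheses with `p > 1`, for every `q > 0`, the
`q`-norm arc-length density `(C^((p-1)q) + S^((p-1)q))^(1/q)` is identically `1`
on `[0,T]` if and only if `(p-1)·q = p`. -/
theorem arc_length_density_constant_iff
    (p T : ℝ) (C S : ℝ → ℝ)
    (hp : 1 < p) (hT : 0 < T)
    (hCdiff : Differentiable ℝ C) (hSdiff : Differentiable ℝ S)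
    (hC' : ∀ t ∈ Set.Icc (0 : ℝ) T, deriv C t = -(S t ^ (p - 1)))
    (hS' : ∀ t ∈ Set.Icc (0 : ℝ) T, deriv S t = C t ^ (p - 1))
    (hCnn : ∀ t ∈ Set.Icc (0 : ℝ) T, 0 ≤ C t)
    (hSnn : ∀ t ∈ Set.Icc (0 : ℝ) T, 0 ≤ S t)
    (hC0 : C 0 = 1) (hS0 : S 0 = 0) (hCT : C T = 0) :
    ∀ q : ℝ, 0 < q →
      ((∀ t ∈ Set.Icc (0 : ℝ) T,
          (C t ^ ((p - 1) * q) + S t ^ ((p - 1) * q)) ^ (1 / q) = 1)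
        ↔ (p - 1) * q = p) := by
  have hppos : (0:ℝ) < p := by linarith
  -- Pythagorean identity
  have hPyth : ∀ t ∈ Set.Icc (0:ℝ) T, C t ^ p + S t ^ p = 1 := by
    set g : ℝ → ℝ := fun t => C t ^ p + S t ^ p with hg
    have hderiv : ∀ x ∈ Set.Ico (0:ℝ) T, HasDerivWithinAt g 0 (Set.Ici x) x := by
      intro x hx
      have hx' : x ∈ Set.Icc (0:ℝ) T := ⟨hx.1, hx.2.le⟩
      have h1 : HasDerivAt (fun y : ℝ => y ^ p) (p * C x ^ (p-1)) (C x) :=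
        Real.hasDerivAt_rpow_const (Or.inr hp.le)
      have h2 : HasDerivAt (fun y : ℝ => y ^ p) (p * S x ^ (p-1)) (S x) :=
        Real.hasDerivAt_rpow_const (Or.inr hp.le)
      have hC : HasDerivAt C (deriv C x) x := (hCdiff x).hasDerivAt
      have hS : HasDerivAt S (deriv S x) x := (hSdiff x).hasDerivAt
      have key := ((h1.comp x hC).add (h2.comp x hS))
      rw [hC' x hx', hS' x hx'] at key
      have h0 : p * C x ^ (p-1) * -(S x ^ (p-1)) + p * S x ^ (p-1) * (C x ^ (p-1)) = 0 := by
        ring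
      rw [h0] at key
      exact key.hasDerivWithinAt
    have hcont : ContinuousOn g (Set.Icc 0 T) := by
      apply Continuous.continuousOn
      exact (hCdiff.continuous.rpow_const (fun x => Or.inr hppos.le)).add
        (hSdiff.continuous.rpow_const (fun x => Or.inr hppos.le))
    intro t ht
    have := constant_of_has_deriv_right_zero hcont hderiv t ht
    have hg0 : g 0 = 1 := by
      simp only [hg, hC0, hS0, Real.one_rpow, Real.zero_rpow hppos.ne']
      norm_num
    rw [hg0] at this
    exact this
  intro q hq
  set r : ℝ := (p - 1) * q with hrdef
  constructor
  · intro h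
    -- find t0 with C t0 = 1/2
    have hmem : (1/2 : ℝ) ∈ Set.Icc (C T) (C 0) := by
      rw [hC0, hCT]; constructor <;> norm_num
    have := intermediate_value_Icc' hT.le hCdiff.continuous.continuousOn hmem
    obtain ⟨t0, ht0, hCt0⟩ := this
    set b : ℝ := S t0 with hbdef
    have hbnn : 0 ≤ b := hSnn t0 ht0
    have hPy := hPyth t0 ht0
    rw [hCt0] at hPy
    have hhalf : (0:ℝ) < (1/2 : ℝ) ^ p := Real.rpow_pos_of_pos (by norm_num) p
    have hhalf1 : ((1:ℝ)/2) ^ p < 1 := Real.rpow_lt_one (by norm_num) (by norm_num) hppos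
    have hbp : b ^ p = 1 - (1/2:ℝ) ^ p := by linarith
    have hbpos : 0 < b := by
      rcases hbnn.lt_or_eq with h' | h'
      · exact h'
      · exfalso
        rw [← h', Real.zero_rpow hppos.ne'] at hbp
        linarith
    have hblt1 : b < 1 := by
      by_contra hb1
      push_neg at hb1
      have : (1:ℝ) ^ p ≤ b ^ p := Real.rpow_le_rpow (by norm_num) hb1 hppos.le
      rw [Real.one_rpow] at this
      linarith
    -- r-norm identity at t0
    have hA : (1/2:ℝ) ^ r + b ^ r = 1 := by
      have h1 := h t0 ht0
      rw [hCt0] at h1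
      have hAnn : 0 ≤ (1/2:ℝ) ^ r + b ^ r :=
        add_nonneg (Real.rpow_nonneg (by norm_num) r) (Real.rpow_nonneg hbnn r)
      have : (((1/2:ℝ) ^ r + b ^ r) ^ (1/q)) ^ q = (1:ℝ) ^ q := by rw [h1]
      rw [← Real.rpow_mul hAnn, one_div_mul_cancel hq.ne', Real.rpow_one,
        Real.one_rpow] at this
      simpa using this
    -- strict monotonicity in the exponent forces r = p
    rcases lt_trichotomy r p with hlt | heq | hgt
    · exfalso
      have h1 : (1/2:ℝ) ^ p < (1/2:ℝ) ^ r :=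
        Real.rpow_lt_rpow_of_exponent_gt (by norm_num) (by norm_num) hlt
      have h2 : b ^ p < b ^ r :=
        Real.rpow_lt_rpow_of_exponent_gt hbpos hblt1 hlt
      linarith
    · exact heq
    · exfalso
      have h1 : (1/2:ℝ) ^ r < (1/2:ℝ) ^ p :=
        Real.rpow_lt_rpow_of_exponent_gt (by norm_num) (by norm_num) hgt
      have h2 : b ^ r < b ^ p :=
        Real.rpow_lt_rpow_of_exponent_gt hbpos hblt1 hgt
      linarith
  · intro hrp
    intro t ht
    rw [hrdef] at *
    rw [hrp, hPyth t ht, Real.one_rpow]
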